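/- Weighted weak-type bound transfer for square-root sparse operators yields the sharp aperture estimate for 1<p<2: if for every sparse collection 𝒮 one has ‖(𝒜⁰_𝒮(f,f))^{1/2}‖_{L^{p,∞}(w)} ≤ C [w]_{A_p}^{max(1/2,1/p)} ‖f‖_{L^p(w)}, and S̃_{α,ψ}f satisfies the pointwise bound (S̃_{α,ψ}f(x))² ≲ α^{2d} Σ_{finite set of grids} Σ_{Q∈𝒮} ⟨|f|⟩_Q² 1_Q(x) for sparse families 𝒮, then ‖S̃_{α,ψ}f‖_{L^{p,∞}(w)} ≲ α^d [w]_{A_p}^{1/p} ‖f‖_{L^p(w)} for 1 < p < 2. -/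

import Mathlib

open MeasureTheory ENNReal Set
noncomputable section

/-- A dyadic cube in `ℝ^d`: generation `gen` (side length `2^{-gen}`) and
position `pos` (lower-left corner `pos * 2^{-gen}`). -/
structure DyadicCube (d : ℕ) where
  gen : ℤ
  pos : Fin d → ℤ

namespace DyadicCube
variable {d : ℕ}

/-- The half-open cube represented by `Q`. -/
def toSet (Q : DyadicCube d) : Set (Fin d → ℝ) :=
  {x | ∀ i, (Q.pos i : ℝ) * (2 : ℝ) ^ (-Q.gen) ≤ x i ∧
        x i < ((Q.pos i : ℝ) + 1) * (2 : ℝ) ^ (-Q.gen)}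

/-- Lebesgue measure of the cube. -/
def vol (Q : DyadicCube d) : ℝ≥0∞ := volume Q.toSet

/-- The dyadic parent of a cube. -/
def parent (Q : DyadicCube d) : DyadicCube d :=
  ⟨Q.gen - 1, fun i => Int.fdiv (Q.pos i) 2⟩

/-- The `m`-th dyadic ancestor of a cube. -/
def ancestor (m : ℕ) (Q : DyadicCube d) : DyadicCube d := parent^[m] Q

/-- `Q.In P`: `Q` is a dyadic subcube of `P`. -/
def In (Q P : DyadicCube d) : Prop := P.gen ≤ Q.gen ∧ Q.toSet ⊆ P.toSet

/-- Average of a nonnegative (extended-real-valued) function over a cube. -/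
def avg (Q : DyadicCube d) (f : (Fin d → ℝ) → ℝ≥0∞) : ℝ≥0∞ :=
  (∫⁻ x in Q.toSet, f x) / Q.vol

/-- Average of a real-valued function over a cube. -/
def avgR (Q : DyadicCube d) (f : (Fin d → ℝ) → ℝ) : ℝ :=
  (∫ x in Q.toSet, f x) / (Q.vol).toReal

/-- `α` is a Carleson sequence on `𝒟(P₀)` with constant `C`. -/
def Carleson (P₀ : DyadicCube d) (α : DyadicCube d → ℝ≥0∞) (C : ℝ≥0∞) : Prop :=
  ∀ P : DyadicCube d, P.In P₀ →
    ∑' Q : {Q : DyadicCube d // Q.In P}, α Q.1 * Q.1.vol ≤ C * P.vol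

/-- Real-valued version of the Carleson condition. -/
def CarlesonR (P₀ : DyadicCube d) (α : DyadicCube d → ℝ) (C : ℝ) : Prop :=
  ∀ P : DyadicCube d, P.In P₀ →
    ∑' Q : {Q : DyadicCube d // Q.In P}, α Q.1 * (Q.1.vol).toReal ≤ C * (P.vol).toReal

/-- `η`-sparse collection of dyadic cubes. -/
def Sparse (η : ℝ≥0∞) (S : Set (DyadicCube d)) : Prop :=
  ∃ E : DyadicCube d → Set (Fin d → ℝ),
    (∀ Q ∈ S, MeasurableSet (E Q) ∧ E Q ⊆ Q.toSet ∧ η * Q.vol ≤ volume (E Q)) ∧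
    S.Pairwise fun Q Q' => Disjoint (E Q) (E Q')

/-- The `k`-linear positive dyadic shift of complexity `m` on `𝒟(P₀)`. -/
def shift (P₀ : DyadicCube d) (α : DyadicCube d → ℝ≥0∞) (m : ℕ) {k : ℕ}
    (f : Fin k → (Fin d → ℝ) → ℝ≥0∞) (x : Fin d → ℝ) : ℝ≥0∞ :=
  ∑' Q : {Q : DyadicCube d // Q.In P₀ ∧ P₀.gen + m ≤ Q.gen},
    α Q.1 * (∏ i, (ancestor m Q.1).avg (f i)) * Q.1.toSet.indicator 1 x

/-- The sliced shift `𝒜^{m;0}_{P,α}`, summing only over generations `jm`, `j ≥ 1`,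
relative to `P`. -/
def slicedShift (P : DyadicCube d) (α : DyadicCube d → ℝ≥0∞) (m : ℕ) {k : ℕ}
    (f : Fin k → (Fin d → ℝ) → ℝ≥0∞) (x : Fin d → ℝ) : ℝ≥0∞ :=
  ∑' Q : {Q : DyadicCube d // Q.In P ∧ ∃ j : ℕ, 1 ≤ j ∧ Q.gen = P.gen + j * m},
    α Q.1 * (∏ i, (ancestor m Q.1).avg (f i)) * Q.1.toSet.indicator 1 x

/-- Real-valued `k`-linear positive dyadic shift of complexity `m`. -/
def shiftR (P₀ : DyadicCube d) (α : DyadicCube d → ℝ) (m : ℕ) {k : ℕ}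
    (f : Fin k → (Fin d → ℝ) → ℝ) (x : Fin d → ℝ) : ℝ :=
  ∑' Q : {Q : DyadicCube d // Q.In P₀ ∧ P₀.gen + m ≤ Q.gen},
    α Q.1 * (∏ i, (ancestor m Q.1).avgR (f i)) * Q.1.toSet.indicator 1 x

/-- Real-valued sliced shift `𝒜^{m;0}_{P,α}`. -/
def slicedShiftR (P : DyadicCube d) (α : DyadicCube d → ℝ) (m : ℕ) {k : ℕ}
    (f : Fin k → (Fin d → ℝ) → ℝ) (x : Fin d → ℝ) : ℝ :=
  ∑' Q : {Q : DyadicCube d // Q.In P ∧ ∃ j : ℕ, 1 ≤ j ∧ Q.gen = P.gen + j * m},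
    α Q.1 * (∏ i, (ancestor m Q.1).avgR (f i)) * Q.1.toSet.indicator 1 x

/-- The positive sparse operator `𝒜⁰_𝒮`. -/
def sparseOp (S : Set (DyadicCube d)) {k : ℕ}
    (f : Fin k → (Fin d → ℝ) → ℝ≥0∞) (x : Fin d → ℝ) : ℝ≥0∞ :=
  ∑' Q : S, (∏ i, (Q : DyadicCube d).avg (f i)) * (Q : DyadicCube d).toSet.indicator 1 x

end DyadicCube

open DyadicCube

/-- The weighted weak `L^{p,∞}(w)` quasi-norm `sup_λ λ w({g > λ})^{1/p}`. -/
noncomputable def wnorm {d : ℕ} (g : (Fin d → ℝ) → ℝ≥0∞) (p : ℝ)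
    (w : (Fin d → ℝ) → ℝ≥0∞) : ℝ≥0∞ :=
  ⨆ lam : ℝ≥0∞, lam * (∫⁻ x in {y | lam < g y}, w x) ^ (1 / p)

/-- The squared sparse operator `𝒜⁰_𝒮(f,f)(x) = Σ_{Q∈𝒮} ⟨f⟩_Q² 1_Q(x)`. -/
noncomputable def sparseSq {d : ℕ} (S : Set (DyadicCube d))
    (f : (Fin d → ℝ) → ℝ≥0∞) (x : Fin d → ℝ) : ℝ≥0∞ :=
  ∑' Q : S, ((Q : DyadicCube d).avg f) ^ 2 * (Q : DyadicCube d).toSet.indicator 1 x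

/-- Auxiliary: for `0 < r ≤ 1`, `(∑ a i) ^ r ≤ ∑ (a i) ^ r` over a finite set. -/
lemma finset_sum_rpow_le {ι : Type*} (s : Finset ι) (a : ι → ℝ≥0∞) {r : ℝ}
    (hr0 : 0 < r) (hr1 : r ≤ 1) :
    (∑ i ∈ s, a i) ^ r ≤ ∑ i ∈ s, (a i) ^ r := by
  classical
  induction s using Finset.induction with
  | empty => simp [ENNReal.zero_rpow_of_pos hr0]
  | insert _ _ hnot ih =>
    rw [Finset.sum_insert hnot, Finset.sum_insert hnot]
    calc _ ≤ _ ^ r + _ ^ r := ENNReal.rpow_add_le_add_rpow _ _ hr0.le hr1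
      _ ≤ _ := add_le_add_right ih _

/-- transfer of the weighted weak-type bound for square roots of sparse
square operators: if `‖(𝒜⁰_𝒮(f,f))^{1/2}‖_{L^{p,∞}(w)} ≤ C [w]^{max(1/2,1/p)} ‖f‖_{L^p(w)}`
for every sparse `𝒮`, and the (regularized) square function satisfies the pointwise bound
`(S̃f)² ≲ α^{2d} Σ_{grids} Σ_{Q∈𝒮} ⟨f⟩_Q² 1_Q`, then
`‖S̃f‖_{L^{p,∞}(w)} ≲ α^d [w]^{1/p} ‖f‖_{L^p(w)}` for `1 < p < 2`. -/
theorem aperture_transfer (d N : ℕ) (p : ℝ) (hp1 : 1 < p) (hp2 : p < 2)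
    (C c : ℝ≥0∞) (hC : C < ⊤) (hc : c < ⊤) :
    ∃ C' : ℝ≥0∞, 0 < C' ∧ C' < ⊤ ∧
      ∀ (w : (Fin d → ℝ) → ℝ≥0∞) (Aw : ℝ≥0∞), 1 ≤ Aw →
      ∀ (α : ℝ), 0 < α →
      ∀ Sq : ((Fin d → ℝ) → ℝ≥0∞) → (Fin d → ℝ) → ℝ≥0∞,
        (∀ S : Set (DyadicCube d), Sparse (1 / 2) S →
          ∀ f : (Fin d → ℝ) → ℝ≥0∞,
            wnorm (fun x => (sparseSq S f x) ^ (1 / 2 : ℝ)) p w ≤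
              C * Aw ^ max (1 / 2 : ℝ) (1 / p) * (∫⁻ x, f x ^ p * w x) ^ (1 / p)) →
        (∀ f : (Fin d → ℝ) → ℝ≥0∞, ∃ S : Fin N → Set (DyadicCube d),
          (∀ j, Sparse (1 / 2) (S j)) ∧
          ∀ x, (Sq f x) ^ 2 ≤
            c * ENNReal.ofReal (α ^ (2 * d)) * ∑ j, sparseSq (S j) f x) →
        ∀ f : (Fin d → ℝ) → ℝ≥0∞,
          wnorm (Sq f) p w ≤
            C' * ENNReal.ofReal (α ^ d) * Aw ^ (1 / p) *
              (∫⁻ x, f x ^ p * w x) ^ (1 / p) := by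
  have hp0 : (0:ℝ) < p := lt_trans one_pos hp1
  have hpinv : (0:ℝ) < 1 / p := by positivity
  have hpinv1 : (1:ℝ) / p ≤ 1 := by rw [div_le_one hp0]; linarith
  refine ⟨(C + 1) * (c ^ (1/2 : ℝ) + 1) * ((N : ℝ≥0∞) + 1) ^ 2, ?_, ?_, ?_⟩
  · rw [pos_iff_ne_zero]
    exact mul_ne_zero (mul_ne_zero (by simp) (by simp))
      (pow_ne_zero _ (by simp))
  · rw [lt_top_iff_ne_top]
    refine ENNReal.mul_ne_top (ENNReal.mul_ne_top ?_ ?_) ?_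
    · exact ENNReal.add_ne_top.2 ⟨hC.ne, ENNReal.one_ne_top⟩
    · exact ENNReal.add_ne_top.2
        ⟨(ENNReal.rpow_lt_top_of_nonneg (by norm_num) hc.ne).ne, ENNReal.one_ne_top⟩
    · exact ENNReal.pow_ne_top (ENNReal.add_ne_top.2 ⟨ENNReal.natCast_ne_top N, ENNReal.one_ne_top⟩)
  intro w Aw hAw α hα Sq hsparse hpt f
  obtain ⟨S, hS, hSq⟩ := hpt f
  have hαd : (0:ℝ) < α ^ d := pow_pos hα d
  set B := ENNReal.ofReal (α ^ d) with hB
  have hB0 : B ≠ 0 := by simp [hB, ENNReal.ofReal_eq_zero, not_le, hαd]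
  have hBt : B ≠ ⊤ := ENNReal.ofReal_ne_top
  set K := c ^ (1/2 : ℝ) * B with hKdef
  have hKt : K ≠ ⊤ :=
    ENNReal.mul_ne_top (ENNReal.rpow_lt_top_of_nonneg (by norm_num) hc.ne).ne hBt
  set g : Fin N → (Fin d → ℝ) → ℝ≥0∞ := fun j x => (sparseSq (S j) f x) ^ (1/2 : ℝ) with hg
  have hmax : max (1/2 : ℝ) (1/p) = 1/p := by
    apply max_eq_right
    rw [div_le_div_iff₀ (by norm_num) hp0]
    linarith
  set I := (∫⁻ x, f x ^ p * w x) ^ (1/p) with hI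
  have hwn : ∀ j, wnorm (g j) p w ≤ C * Aw ^ (1/p) * I := by
    intro j
    have h := hsparse (S j) (hS j) f
    rwa [hmax] at h
  have hpoint : ∀ x, Sq f x ≤ K * ∑ j, g j x := by
    intro x
    have h2 : c * ENNReal.ofReal (α ^ (2 * d)) = c * B ^ 2 := by
      rw [hB, ← ENNReal.ofReal_pow hαd.le, ← pow_mul, mul_comm d 2]
    have h1 : Sq f x = ((Sq f x) ^ 2) ^ (1/2 : ℝ) := by
      rw [← ENNReal.rpow_natCast (Sq f x) 2, ← ENNReal.rpow_mul]
      norm_num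
    rw [h1]
    calc ((Sq f x) ^ 2) ^ (1/2 : ℝ)
        ≤ (c * B ^ 2 * ∑ j, sparseSq (S j) f x) ^ (1/2 : ℝ) := by
          apply ENNReal.rpow_le_rpow _ (by norm_num)
          rw [← h2]; exact hSq x
      _ = K * (∑ j, sparseSq (S j) f x) ^ (1/2 : ℝ) := by
          rw [ENNReal.mul_rpow_of_nonneg _ _ (by norm_num : (0:ℝ) ≤ 1/2),
            ENNReal.mul_rpow_of_nonneg _ _ (by norm_num : (0:ℝ) ≤ 1/2)]
          congr 1
          rw [hKdef]
          congr 1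
          rw [← ENNReal.rpow_natCast B 2, ← ENNReal.rpow_mul]
          norm_num
      _ ≤ K * ∑ j, g j x := by
          apply mul_le_mul_right
          exact finset_sum_rpow_le _ _ (by norm_num) (by norm_num)
  unfold wnorm
  apply iSup_le
  intro lam
  by_cases hz : ∀ x, Sq f x = 0
  · have hempty : {y | lam < Sq f y} = ∅ := by
      ext y; simp [hz y]
    rw [hempty, Measure.restrict_empty, lintegral_zero_measure,
      ENNReal.zero_rpow_of_pos hpinv, mul_zero]
    exact zero_le
  · push_neg at hz
    obtain ⟨x₀, hx₀⟩ := hz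
    have hx2 : Sq f x₀ ^ 2 ≠ 0 := pow_ne_zero _ hx₀
    have hrhs : c * ENNReal.ofReal (α ^ (2*d)) * ∑ j, sparseSq (S j) f x₀ ≠ 0 :=
      fun h => hx2 (le_antisymm (h ▸ hSq x₀) (zero_le))
    have hc0 : c ≠ 0 := fun h => hrhs (by simp [h])
    have hN0 : (N:ℝ≥0∞) ≠ 0 := by
      intro h
      have hN : N = 0 := by exact_mod_cast h
      subst hN
      exact hrhs (by simp)
    have hK0 : K ≠ 0 :=
      mul_ne_zero (by simp [ENNReal.rpow_eq_zero_iff, hc0]) hB0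
    set M := K * N with hM
    have hM0 : M ≠ 0 := mul_ne_zero hK0 hN0
    have hMt : M ≠ ⊤ := ENNReal.mul_ne_top hKt (ENNReal.natCast_ne_top N)
    have hcover : {y | lam < Sq f y} ⊆ ⋃ j, {y | lam / M < g j y} := by
      intro x hx
      simp only [Set.mem_setOf_eq] at hx
      by_contra hco
      simp only [Set.mem_iUnion, Set.mem_setOf_eq, not_exists, not_lt] at hco
      have hle : Sq f x ≤ lam := by
        calc Sq f x ≤ K * ∑ j, g j x := hpoint x
          _ ≤ K * ∑ _j : Fin N, lam / M :=
              mul_le_mul_right (Finset.sum_le_sum fun j _ => hco j) _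
          _ = M * (lam / M) := by
              rw [Finset.sum_const, Finset.card_univ, Fintype.card_fin, nsmul_eq_mul, hM]
              ring
          _ ≤ lam := ENNReal.mul_div_le
      exact absurd hx (not_lt.mpr hle)
    calc lam * (∫⁻ x in {y | lam < Sq f y}, w x) ^ (1/p)
        ≤ lam * (∑' j : Fin N, ∫⁻ x in {y | lam / M < g j y}, w x) ^ (1/p) := by
          apply mul_le_mul_right
          apply ENNReal.rpow_le_rpow _ hpinv.le
          exact le_trans (lintegral_mono_set hcover) (lintegral_iUnion_le _ _)
      _ = lam * (∑ j : Fin N, ∫⁻ x in {y | lam / M < g j y}, w x) ^ (1/p) := by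
          rw [tsum_fintype]
      _ ≤ lam * ∑ j : Fin N, (∫⁻ x in {y | lam / M < g j y}, w x) ^ (1/p) :=
          mul_le_mul_right (finset_sum_rpow_le _ _ hpinv hpinv1) _
      _ = ∑ j : Fin N, M * ((lam / M) * (∫⁻ x in {y | lam / M < g j y}, w x) ^ (1/p)) := by
          rw [Finset.mul_sum]
          refine Finset.sum_congr rfl fun j _ => ?_
          rw [← mul_assoc, ENNReal.mul_div_cancel hM0 hMt]
      _ ≤ ∑ _j : Fin N, M * (C * Aw ^ (1/p) * I) := by
          refine Finset.sum_le_sum fun j _ => mul_le_mul_right ?_ _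
          refine le_trans ?_ (hwn j)
          exact le_iSup (fun l => l * (∫⁻ x in {y | l < g j y}, w x) ^ (1/p)) (lam / M)
      _ = (N : ℝ≥0∞) * (M * (C * Aw ^ (1/p) * I)) := by
          rw [Finset.sum_const, Finset.card_univ, Fintype.card_fin, nsmul_eq_mul]
      _ ≤ (C + 1) * (c ^ (1/2 : ℝ) + 1) * ((N : ℝ≥0∞) + 1) ^ 2 * B * Aw ^ (1/p) * I := by
          rw [hM, hKdef]
          calc (N:ℝ≥0∞) * (c ^ (1/2:ℝ) * B * N * (C * Aw ^ (1/p) * I))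
              = c ^ (1/2:ℝ) * C * ((N:ℝ≥0∞) * (N:ℝ≥0∞)) * B * Aw ^ (1/p) * I := by ring
            _ ≤ (c ^ (1/2:ℝ) + 1) * (C + 1) * (((N:ℝ≥0∞) + 1) * ((N:ℝ≥0∞) + 1)) * B *
                  Aw ^ (1/p) * I := by
                gcongr <;> exact le_self_add
            _ = (C + 1) * (c ^ (1/2:ℝ) + 1) * ((N:ℝ≥0∞) + 1) ^ 2 * B * Aw ^ (1/p) * I := by
                ring
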